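/- Every CW-complex is numerically generated: if X is a topological space admitting a CW-complex structure (with X equal to the union of its cells and carrying the weak topology determined by its closed cells), then the topology of X equals the final (coinduced) topology with respect to all continuous maps from topological standard simplices Δ^n into X. -/

import Mathlib

open TopologicalSpace Topology

/-- The topological standard `n`-simplex
`Δⁿ = {x ∈ ℝ^{n+1} : xᵢ ≥ 0, ∑ xᵢ = 1}` with its subspace topology. -/
abbrev TopSimplex (n : ℕ) : Type := stdSimplex ℝ (Fin (n + 1))

/-- The final (coinduced) topology on `X` with respect to all singular simplices of
`(X, t)`, i.e. with respect to all maps `Δⁿ → X` that are continuous for `t`. -/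
def nuTop (X : Type*) (t : TopologicalSpace X) : TopologicalSpace X :=
  ⨆ (n : ℕ) (σ : {f : TopSimplex n → X // Continuous[inferInstance, t] f}),
    TopologicalSpace.coinduced σ.1 inferInstance

/-- A topological space is numerically generated if its topology coincides with the
final topology with respect to all of its singular simplices. -/
def NumericallyGenerated (X : Type*) [t : TopologicalSpace X] : Prop :=
  t = nuTop X t

universe u

namespace CWComplexOld

open CategoryTheory

/-- The `n`-dimensional sphere (in `ℝ^{n+1}`). -/
noncomputable def sphere (n : ℤ) : TopCat.{u} :=
  TopCat.of <| ULift <| Metric.sphere (0 : EuclideanSpace ℝ <| Fin <| Int.toNat <| n + 1) 1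

/-- The `n`-dimensional closed disk. -/
noncomputable def disk (n : ℤ) : TopCat.{u} :=
  TopCat.of <| ULift <| Metric.closedBall (0 : EuclideanSpace ℝ <| Fin <| Int.toNat n) 1

/-- The inclusion map from the `n`-sphere to the `(n + 1)`-disk. -/
noncomputable def sphereInclusion (n : ℤ) : sphere.{u} n ⟶ disk.{u} (n + 1) :=
  TopCat.ofHom ⟨fun x => ULift.up ⟨x.down.1, le_of_eq x.down.2⟩,
    continuous_uliftUp.comp
      ((continuous_subtype_val.comp continuous_uliftDown).subtype_mk _)⟩

/-- A type witnessing that `X'` is obtained from `X` by attaching generalized cells `f : A ⟶ B`. -/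
structure AttachGeneralizedCells {A B : TopCat.{u}} (f : A ⟶ B) (X X' : TopCat.{u}) where
  /-- The index type over the generalized cells -/
  cells : Type u
  /-- An attaching map for each generalized cell -/
  attachMaps : cells → (A ⟶ X)
  /-- `X'` is the pushout of `∐ A ⟶ X` and `∐ A ⟶ ∐ B`. -/
  iso_pushout : X' ≅ Limits.pushout (Limits.Sigma.desc attachMaps)
    (Limits.Sigma.map fun (_ : cells) ↦ f)

/-- A type witnessing that `X'` is obtained from `X` by attaching `(n + 1)`-disks. -/
def AttachCells (n : ℤ) := AttachGeneralizedCells (sphereInclusion.{u} n)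

end CWComplexOld

/-- A relative CW-complex: `sk (n + 1)` is obtained from `sk n` by attaching `n`-disks. -/
structure RelativeCWComplex where
  /-- The skeletons. -/
  sk : ℕ → TopCat.{u}
  /-- Each `sk (n + 1)` is obtained from `sk n` by attaching `n`-disks. -/
  attachCells (n : ℕ) : CWComplexOld.AttachCells ((n : ℤ) - 1) (sk n) (sk (n + 1))

/-- A CW-complex is a relative CW-complex whose `sk 0` is empty. -/
structure CWComplexOld extends RelativeCWComplex.{u} where
  /-- `sk 0` is empty. -/
  isEmpty_sk_zero : IsEmpty (sk 0)

namespace RelativeCWComplex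

open CategoryTheory

/-- The inclusion map `sk n ⟶ sk (n + 1)`. -/
noncomputable def skInclusion (X : RelativeCWComplex.{u}) (n : ℕ) : X.sk n ⟶ X.sk (n + 1) :=
  Limits.pushout.inl _ _ ≫ (X.attachCells n).iso_pushout.inv

/-- The topology on a relative CW-complex. -/
noncomputable def toTopCat (X : RelativeCWComplex.{u}) : TopCat.{u} :=
  Limits.colimit (Functor.ofSequence (skInclusion X))

end RelativeCWComplex

section Aux

universe v w

lemma nuTop_le {X : Type*} (t : TopologicalSpace X) : nuTop X t ≤ t :=
  iSup_le fun _ => iSup_le fun σ => continuous_iff_coinduced_le.mp σ.2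

lemma ng_iff {X : Type*} {t : TopologicalSpace X} :
    @NumericallyGenerated X t ↔ t ≤ nuTop X t :=
  ⟨le_of_eq, fun h => le_antisymm h (nuTop_le t)⟩

lemma coinduced_le_nuTop {X Y : Type*} {tY : TopologicalSpace Y} {t : TopologicalSpace X}
    {g : Y → X} (hg : Continuous[tY, t] g) (hY : @NumericallyGenerated Y tY) :
    tY.coinduced g ≤ nuTop X t := by
  conv_lhs => rw [show tY = nuTop Y tY from hY]
  rw [nuTop, coinduced_iSup]
  refine iSup_le fun n => ?_
  rw [coinduced_iSup]
  refine iSup_le fun σ => ?_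
  rw [coinduced_compose]
  exact le_iSup₂_of_le n ⟨g ∘ σ.1, hg.comp σ.2⟩ le_rfl

lemma ng_of_quotient {X Y : Type*} {t : TopologicalSpace X} {tY : TopologicalSpace Y}
    {g : Y → X} (hg : Continuous[tY, t] g) (hng : @NumericallyGenerated Y tY)
    (h : t ≤ tY.coinduced g) : @NumericallyGenerated X t :=
  ng_iff.mpr (h.trans (coinduced_le_nuTop hg hng))

lemma ng_of_homeomorph {X Y : Type*} [TopologicalSpace X] [TopologicalSpace Y]
    (e : X ≃ₜ Y) (h : NumericallyGenerated Y) : NumericallyGenerated X :=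
  ng_of_quotient e.symm.continuous h e.symm.isQuotientMap.eq_coinduced.le

lemma ng_of_isEmpty {X : Type*} [IsEmpty X] {t : TopologicalSpace X} :
    @NumericallyGenerated X t := by
  refine TopologicalSpace.ext_iff.mpr fun s => ?_
  rw [Set.eq_empty_of_isEmpty s]
  exact ⟨fun _ => @isOpen_empty _ (nuTop X t), fun _ => @isOpen_empty _ t⟩

lemma ng_topSimplex (n : ℕ) : NumericallyGenerated (TopSimplex n) :=
  ng_iff.mpr (le_iSup₂_of_le n ⟨id, continuous_id⟩ (by rw [coinduced_id]))

open CategoryTheory Limits TopCat RelativeCWComplex in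
lemma isColimit_str_le {J : Type v} [Category.{w} J] {F : J ⥤ TopCat.{u}} {c : Cocone F}
    [PreservesColimit F (forget TopCat)] (hc : IsColimit c) :
    c.pt.str ≤ ⨆ j, TopologicalSpace.coinduced (Y := ↑c.pt) (fun y => c.ι.app j y) (F.obj j).str := by
  set t' := ⨆ j, TopologicalSpace.coinduced (Y := ↑c.pt) (fun y => c.ι.app j y) (F.obj j).str with ht'
  let c' : Cocone F :=
    { pt := @TopCat.of c.pt t'
      ι :=
        { app := fun j => @TopCat.ofHom (F.obj j) c.pt _ t' ⟨fun y => c.ι.app j y, continuous_iff_coinduced_le.mpr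
            (le_iSup (fun j => TopologicalSpace.coinduced (Y := ↑c.pt) (fun y => c.ι.app j y) (F.obj j).str) j)⟩
          naturality := fun j j' f => by
            ext x
            exact CategoryTheory.ConcreteCategory.congr_hom (c.ι.naturality f) x } }
  have hid : (fun x => hc.desc c' x : c.pt → c.pt) = id := by
    funext x
    obtain ⟨j, y, rfl⟩ := Concrete.isColimit_exists_rep F hc x
    have h := CategoryTheory.ConcreteCategory.congr_hom (hc.fac c' j) y
    rw [CategoryTheory.comp_apply] at h
    exact h
  refine continuous_id_iff_le.mp ?_
  rw [← hid]
  exact @ContinuousMap.continuous_toFun _ _ c.pt.str t' (hc.desc c').hom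

open CategoryTheory Limits TopCat RelativeCWComplex in
lemma ng_of_isColimit {J : Type v} [Category.{w} J] {F : J ⥤ TopCat.{u}} {c : Cocone F}
    [PreservesColimit F (forget TopCat)] (hc : IsColimit c)
    (h : ∀ j, TopologicalSpace.coinduced (Y := ↑c.pt) (fun y => c.ι.app j y) (F.obj j).str ≤ nuTop c.pt c.pt.str) :
    NumericallyGenerated c.pt :=
  ng_iff.mpr ((isColimit_str_le hc).trans (iSup_le h))

/-- The affine-ish map from the standard simplex into Euclidean space. -/
noncomputable def simplexToEucl (k : ℕ) (x : TopSimplex k) : EuclideanSpace ℝ (Fin k) :=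
  (WithLp.equiv 2 (Fin k → ℝ)).symm (fun i => 2 * k * x.1 i.castSucc - 1)

lemma continuous_simplexToEucl (k : ℕ) : Continuous (simplexToEucl k) := by
  refine (PiLp.continuous_toLp 2 (fun _ : Fin k => ℝ)).comp ?_
  exact continuous_pi fun i =>
    ((continuous_const.mul ((continuous_apply _).comp continuous_subtype_val)).sub
      continuous_const)

/-- Radial retraction of Euclidean space onto the closed unit ball. -/
noncomputable def radialRetract {E : Type*} [NormedAddCommGroup E] [NormedSpace ℝ E] (v : E) :
    E := (max 1 ‖v‖)⁻¹ • v

lemma radialRetract_pos {E : Type*} [NormedAddCommGroup E] [NormedSpace ℝ E] (v : E) :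
    0 < max 1 ‖v‖ := lt_of_lt_of_le one_pos (le_max_left _ _)

lemma continuous_radialRetract {E : Type*} [NormedAddCommGroup E] [NormedSpace ℝ E] :
    Continuous (radialRetract (E := E)) :=
  ((continuous_const.max continuous_norm).inv₀
    (fun v => (radialRetract_pos v).ne')).smul continuous_id

lemma radialRetract_mem {E : Type*} [NormedAddCommGroup E] [NormedSpace ℝ E] (v : E) :
    radialRetract v ∈ Metric.closedBall (0 : E) 1 := by
  rw [Metric.mem_closedBall, dist_zero_right, radialRetract, norm_smul, norm_inv,
    Real.norm_of_nonneg (radialRetract_pos v).le]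
  rw [inv_mul_le_one₀ (radialRetract_pos v)]
  · exact le_max_right _ _

lemma radialRetract_of_norm_le {E : Type*} [NormedAddCommGroup E] [NormedSpace ℝ E] {v : E}
    (h : ‖v‖ ≤ 1) : radialRetract v = v := by
  rw [radialRetract, max_eq_left h, inv_one, one_smul]

/-- The quotient map from the standard `k`-simplex onto the closed unit ball. -/
noncomputable def simplexToDisk (k : ℕ) (x : TopSimplex k) :
    Metric.closedBall (0 : EuclideanSpace ℝ (Fin k)) 1 :=
  ⟨radialRetract (simplexToEucl k x), radialRetract_mem _⟩

lemma continuous_simplexToDisk (k : ℕ) : Continuous (simplexToDisk k) :=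
  (continuous_radialRetract.comp (continuous_simplexToEucl k)).subtype_mk _

lemma surjective_simplexToDisk (k : ℕ) : Function.Surjective (simplexToDisk k) := by
  rintro ⟨z, hz⟩
  rw [Metric.mem_closedBall, dist_zero_right] at hz
  have hzi : ∀ i : Fin k, |z i| ≤ 1 := by
    intro i
    refine le_trans ?_ hz
    rw [EuclideanSpace.norm_eq]
    calc |z i| = Real.sqrt (‖z i‖ ^ 2) := by
          rw [Real.sqrt_sq_eq_abs, Real.norm_eq_abs, abs_abs]
      _ ≤ _ := Real.sqrt_le_sqrt (Finset.single_le_sum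
          (f := fun i => ‖z i‖ ^ 2) (fun i _ => sq_nonneg _) (Finset.mem_univ i))
  set y : Fin k → ℝ := fun i => (z i + 1) / (2 * k) with hy
  have hy0 : ∀ i, 0 ≤ y i := by
    intro i
    have hk : (0 : ℝ) < k := by exact_mod_cast i.pos
    have h1 := (abs_le.mp (hzi i)).1
    exact div_nonneg (by linarith) (by positivity)
  have hysum : ∑ i, y i ≤ 1 := by
    rcases Nat.eq_zero_or_pos k with hk | hk
    · subst hk; simp
    have hkpos : (0 : ℝ) < 2 * k := by positivity
    have : ∑ i, y i = (∑ i, (z i + 1)) / (2 * k) := by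
      rw [hy, Finset.sum_div]
    rw [this, div_le_one hkpos]
    calc ∑ i, (z i + 1) ≤ ∑ _i : Fin k, (2 : ℝ) := by
          refine Finset.sum_le_sum fun i _ => ?_
          have := (abs_le.mp (hzi i)).2
          linarith
      _ = 2 * k := by simp [mul_comm]
  have hmem : Fin.snoc y (1 - ∑ i, y i) ∈ stdSimplex ℝ (Fin (k + 1)) := by
    refine ⟨fun i => ?_, ?_⟩
    · induction i using Fin.lastCases with
      | last => rw [Fin.snoc_last]; linarith
      | cast i => rw [Fin.snoc_castSucc]; exact hy0 i
    · rw [Fin.sum_univ_castSucc]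
      simp only [Fin.snoc_castSucc, Fin.snoc_last]
      ring
  refine ⟨⟨_, hmem⟩, ?_⟩
  have hAz : simplexToEucl k ⟨_, hmem⟩ = z := by
    rw [simplexToEucl, Equiv.symm_apply_eq]
    funext i
    have hk : (0 : ℝ) < 2 * k := by
      have : (0 : ℝ) < k := by exact_mod_cast i.pos
      positivity
    rw [show WithLp.equiv 2 (Fin k → ℝ) z i = z i from rfl]
    simp only [Fin.snoc_castSucc, hy]
    rw [mul_comm, div_mul_cancel₀ _ hk.ne']
    ring
  exact Subtype.ext (by rw [show (simplexToDisk k ⟨_, hmem⟩ : EuclideanSpace ℝ (Fin k))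
    = radialRetract (simplexToEucl k ⟨_, hmem⟩) from rfl, hAz, radialRetract_of_norm_le hz])

open CategoryTheory in
lemma ng_disk_core (k : ℕ) :
    NumericallyGenerated (Metric.closedBall (0 : EuclideanSpace ℝ (Fin k)) 1) := by
  have hq := IsQuotientMap.of_surjective_continuous (surjective_simplexToDisk k)
    (continuous_simplexToDisk k)
  exact ng_of_quotient (continuous_simplexToDisk k) (ng_topSimplex k) hq.eq_coinduced.le

open CategoryTheory TopCat in
lemma ng_disk (n : ℤ) : NumericallyGenerated (CWComplexOld.disk n : TopCat.{u}) :=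
  ng_of_homeomorph Homeomorph.ulift (ng_disk_core n.toNat)

end Aux

open CategoryTheory Limits TopCat RelativeCWComplex

lemma ng_sigma {ι : Type u} (F : ι → TopCat.{u}) (h : ∀ i, NumericallyGenerated ↑(F i)) :
    NumericallyGenerated ↑(∐ F) := by
  refine ng_of_isColimit (colimit.isColimit (Discrete.functor F)) fun i => ?_
  exact coinduced_le_nuTop
    ((colimit.cocone (Discrete.functor F)).ι.app i).hom.continuous (h i.as)

lemma ng_pushout {A B C : TopCat.{u}} (f : A ⟶ B) (g : A ⟶ C)
    (hB : NumericallyGenerated ↑B) (hC : NumericallyGenerated ↑C) :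
    NumericallyGenerated ↑(pushout f g) := by
  set c := colimit.cocone (span f g) with hc
  have hleft : TopologicalSpace.coinduced (Y := ↑c.pt)
      (fun y => c.ι.app WalkingSpan.left y)
      ((span f g).obj WalkingSpan.left).str ≤ nuTop ↑c.pt c.pt.str :=
    coinduced_le_nuTop (c.ι.app WalkingSpan.left).hom.continuous hB
  refine ng_of_isColimit (colimit.isColimit (span f g)) fun j => ?_
  cases j with
  | some p =>
    cases p with
    | left => exact hleft
    | right => exact coinduced_le_nuTop (c.ι.app WalkingSpan.right).hom.continuous hC
  | none =>
    have hfun : (fun y => c.ι.app WalkingSpan.zero y)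
        = (fun y => c.ι.app WalkingSpan.left y) ∘ ⇑((span f g).map WalkingSpan.Hom.fst) := by
      funext y
      have h1 := CategoryTheory.ConcreteCategory.congr_hom (c.w WalkingSpan.Hom.fst) y
      rw [CategoryTheory.comp_apply] at h1
      exact h1.symm
    rw [hfun, ← coinduced_compose]
    exact le_trans (coinduced_mono (continuous_iff_coinduced_le.mp
      ((span f g).map WalkingSpan.Hom.fst).hom.continuous)) hleft

/-- Every space admitting a CW-complex structure is numerically generated. -/
theorem numericallyGenerated_of_cwComplex (X : Type u) [TopologicalSpace X]
    (K : CWComplexOld.{u}) (e : X ≃ₜ K.toRelativeCWComplex.toTopCat) :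
    NumericallyGenerated X := by
  refine ng_of_homeomorph e ?_
  have hsk : ∀ n : ℕ, NumericallyGenerated ↑(K.sk n) := by
    intro n
    induction n with
    | zero => exact @ng_of_isEmpty _ K.isEmpty_sk_zero _
    | succ n ih =>
      exact ng_of_homeomorph (TopCat.homeoOfIso (K.attachCells n).iso_pushout)
        (ng_pushout _ _ ih (ng_sigma _ fun _ => ng_disk _))
  refine ng_of_isColimit (colimit.isColimit (Functor.ofSequence K.skInclusion)) fun j => ?_
  exact coinduced_le_nuTop
    ((colimit.cocone (Functor.ofSequence K.skInclusion)).ι.app j).hom.continuous (hsk j)
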